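/- Let $\xi_{k,j,n}$, $\zeta_{k,j,n}$ be random variables such that for each $n$ the $\sigma$-algebras $\sigma(\xi_{k,j,n}, \zeta_{k,j,n} : k \in \mathbb{N})$, $j \in \mathbb{N}$, are independent, and $\sup_{k,j,n} \mathbb{E}[\xi_{k,j,n}^8 + \zeta_{k,j,n}^8] < \infty$. Let $K_n = nK + o(n)$ with $K > 0$. Then $n^{-2} \sum_{k=1}^{K_n} k^{-1} \sum_{j=1}^{k} (\xi_{k,j,n}\zeta_{k,j,n} - \mathbb{E}[\xi_{k,j,n}\zeta_{k,j,n}]) \to 0$ almost surely as $n \to \infty$. -/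

import Mathlib

open MeasureTheory ProbabilityTheory Filter

lemma sum_inv_sq_le : ∀ (N : ℕ), ∑ k ∈ Finset.Icc 1 N, ((k:ℝ)⁻¹)^2 ≤ 2 := by
  have key : ∀ N : ℕ, 1 ≤ N → ∑ k ∈ Finset.Icc 1 N, ((k:ℝ)⁻¹)^2 ≤ 2 - (N:ℝ)⁻¹ := by
    intro N hN
    induction N with
    | zero => omega
    | succ n ih =>
      rcases Nat.eq_or_lt_of_le hN with h1 | h1
      · simp [← h1]; norm_num
      · have hn : 1 ≤ n := by omega
        rw [Finset.sum_Icc_succ_top (by omega)]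
        have h2 := ih hn
        have hnp : (0:ℝ) < n := by positivity
        have hnp1 : (0:ℝ) < (n:ℝ)+1 := by positivity
        have key2 : ((n:ℝ)+1)⁻¹^2 ≤ (n:ℝ)⁻¹ - ((n:ℝ)+1)⁻¹ := by
          have h3 : (n:ℝ)⁻¹ - ((n:ℝ)+1)⁻¹ = ((n:ℝ)*((n:ℝ)+1))⁻¹ := by
            field_simp
            ring
          rw [h3, inv_pow]
          apply inv_anti₀ (by positivity)
          nlinarith
        push_cast
        linarith
  intro N
  rcases Nat.eq_zero_or_pos N with h | h
  · simp [h]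
  · have h2 : (0:ℝ) < (N:ℝ)⁻¹ := by positivity
    linarith [key N h]

lemma swap_sum (N : ℕ) (f : ℕ → ℕ → ℝ) :
    ∑ k ∈ Finset.Icc 1 N, ∑ j ∈ Finset.Icc 1 k, f k j
      = ∑ j ∈ Finset.Icc 1 N, ∑ k ∈ Finset.Icc j N, f k j := by
  have h := Finset.sum_Ico_Ico_comm 1 (N+1) (fun j k => f k j)
  simp only [Finset.Ico_add_one_right_eq_Icc] at h
  exact h.symm

theorem stmt6
    {Ω : Type*} [MeasureSpace Ω] [IsProbabilityMeasure (ℙ : Measure Ω)]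
    (ξ ζ : ℕ → ℕ → ℕ → Ω → ℝ)  -- ξ n k j, ζ n k j
    (hmeasξ : ∀ n k j, Measurable (ξ n k j))
    (hmeasζ : ∀ n k j, Measurable (ζ n k j))
    (hindep : ∀ n, iIndep
      (fun j : ℕ => ⨆ k : ℕ,
        (MeasurableSpace.comap (ξ n k j) (borel ℝ) ⊔
         MeasurableSpace.comap (ζ n k j) (borel ℝ))) ℙ)
    (M : ℝ)
    (hmom : ∀ n k j, ∫ ω, ((ξ n k j ω) ^ 8 + (ζ n k j ω) ^ 8) ∂ℙ ≤ M)
    (hint : ∀ n k j, Integrable (fun ω => (ξ n k j ω) ^ 8 + (ζ n k j ω) ^ 8) ℙ)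
    (K : ℝ) (hK : 0 < K)
    (Kn : ℕ → ℕ) (hKn0 : ∀ n, 0 < Kn n)
    (hKn : Tendsto (fun n => (Kn n : ℝ) / n) atTop (nhds K)) :
    ∀ᵐ ω ∂(ℙ : Measure Ω),
      Tendsto (fun n : ℕ =>
        (n : ℝ) ^ (-2 : ℤ) *
          ∑ k ∈ Finset.Icc 1 (Kn n), (k : ℝ)⁻¹ *
            ∑ j ∈ Finset.Icc 1 k,
              (ξ n k j ω * ζ n k j ω - ∫ ω', ξ n k j ω' * ζ n k j ω' ∂ℙ))
        atTop (nhds 0) := by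
  have hM0 : (0:ℝ) ≤ M :=
    le_trans (integral_nonneg (fun ω => by positivity)) (hmom 0 0 0)
  set C : ℝ := M + 2 with hCdef
  have hC0 : (0:ℝ) ≤ C := by simp only [hCdef]; linarith
  set P : ℕ → ℕ → ℕ → Ω → ℝ := fun n k j ω => ξ n k j ω * ζ n k j ω with hPdef
  set m : ℕ → ℕ → ℕ → ℝ := fun n k j => ∫ ω, P n k j ω ∂ℙ with hmdef
  set X : ℕ → ℕ → ℕ → Ω → ℝ := fun n k j ω => P n k j ω - m n k j with hXdef
  set Y : ℕ → ℕ → Ω → ℝ :=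
    fun n j ω => ∑ k ∈ Finset.Icc j (Kn n), (k:ℝ)⁻¹ * X n k j ω with hYdef
  set S : ℕ → Ω → ℝ := fun n ω => ∑ j ∈ Finset.Icc 1 (Kn n), Y n j ω with hSdef
  set T : ℕ → Ω → ℝ := fun n ω => ((n:ℝ)^(-2:ℤ)) * S n ω with hTdef
  -- basic properties of P
  have hPmeas : ∀ n k j, Measurable (P n k j) := fun n k j =>
    (hmeasξ n k j).mul (hmeasζ n k j)
  have hptw : ∀ n k j ω, (P n k j ω)^2 ≤ (ξ n k j ω)^8 + (ζ n k j ω)^8 + 2 := by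
    intro n k j ω
    have hab : P n k j ω = ξ n k j ω * ζ n k j ω := rfl
    rw [hab]
    set a := ξ n k j ω with ha; set b := ζ n k j ω with hb
    nlinarith [sq_nonneg (a^2 - b^2), sq_nonneg (a^4 - 1), sq_nonneg (b^4 - 1),
      sq_nonneg (a^2+b^2), sq_nonneg (a^4+1), sq_nonneg (b^4+1)]
  have hmaj : ∀ n k j, Integrable (fun ω => (ξ n k j ω)^8 + (ζ n k j ω)^8 + 2) ℙ :=
    fun n k j => (hint n k j).add (integrable_const 2)
  have hP2int : ∀ n k j, Integrable (fun ω => (P n k j ω)^2) ℙ := by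
    intro n k j
    refine (hmaj n k j).mono ((hPmeas n k j).pow_const 2).aestronglyMeasurable
      (Filter.Eventually.of_forall ?_)
    intro ω
    have h0 : (0:ℝ) ≤ (ξ n k j ω)^8 + (ζ n k j ω)^8 + 2 := by positivity
    simp only [Real.norm_eq_abs, abs_of_nonneg (sq_nonneg (P n k j ω)), abs_of_nonneg h0]
    exact hptw n k j ω
  have hPmem : ∀ n k j, MemLp (P n k j) 2 ℙ := fun n k j =>
    (memLp_two_iff_integrable_sq (hPmeas n k j).aestronglyMeasurable).2 (hP2int n k j)
  have hPint : ∀ n k j, Integrable (P n k j) ℙ := fun n k j =>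
    (hPmem n k j).integrable one_le_two
  have hP2 : ∀ n k j, ∫ ω, (P n k j ω)^2 ∂ℙ ≤ C := by
    intro n k j
    calc ∫ ω, (P n k j ω)^2 ∂ℙ
        ≤ ∫ ω, ((ξ n k j ω)^8 + (ζ n k j ω)^8 + 2) ∂ℙ :=
          integral_mono (hP2int n k j) (hmaj n k j) (hptw n k j)
      _ = (∫ ω, ((ξ n k j ω)^8 + (ζ n k j ω)^8) ∂ℙ) + 2 := by
          rw [integral_add (hint n k j) (integrable_const 2), integral_const]
          simp
      _ ≤ C := by simp only [hCdef]; linarith [hmom n k j]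
  -- properties of X
  have hXmeas : ∀ n k j, Measurable (X n k j) := fun n k j =>
    (hPmeas n k j).sub measurable_const
  have hXmem : ∀ n k j, MemLp (X n k j) 2 ℙ := fun n k j =>
    (hPmem n k j).sub (memLp_const (m n k j))
  have hXint : ∀ n k j, Integrable (X n k j) ℙ := fun n k j =>
    (hXmem n k j).integrable one_le_two
  have hXzero : ∀ n k j, ∫ ω, X n k j ω ∂ℙ = 0 := by
    intro n k j
    have : X n k j = fun ω => P n k j ω - m n k j := rfl
    rw [this, integral_sub (hPint n k j) (integrable_const _), integral_const]
    simp [hmdef]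
  have hX2le : ∀ n k j, ∫ ω, (X n k j ω)^2 ∂ℙ ≤ C := by
    intro n k j
    have hexp : ∀ ω, (X n k j ω)^2
        = (P n k j ω)^2 - (2 * m n k j) * P n k j ω + (m n k j)^2 := by
      intro ω
      have : X n k j ω = P n k j ω - m n k j := rfl
      rw [this]; ring
    have h1 : ∫ ω, (X n k j ω)^2 ∂ℙ
        = ∫ ω, (P n k j ω)^2 ∂ℙ - (m n k j)^2 := by
      have hB : Integrable (fun ω => (2 * m n k j) * P n k j ω) ℙ :=
        (hPint n k j).const_mul _
      have hA : Integrable (fun ω => (P n k j ω)^2 - (2 * m n k j) * P n k j ω) ℙ :=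
        (hP2int n k j).sub hB
      simp_rw [hexp]
      rw [integral_add hA (integrable_const _),
        integral_sub (hP2int n k j) hB,
        integral_const_mul, integral_const]
      simp only [measure_univ, ENNReal.toReal_one, smul_eq_mul, one_mul, probReal_univ, mul_one]
      have : ∫ ω, P n k j ω ∂ℙ = m n k j := rfl
      rw [this]; ring
    rw [h1]
    nlinarith [sq_nonneg (m n k j), hP2 n k j]
  -- properties of Y
  have hYmeas : ∀ n j, Measurable (Y n j) := by
    intro n j
    exact Finset.measurable_sum _ (fun k _ => (hXmeas n k j).const_mul _)
  have hYmem : ∀ n j, MemLp (Y n j) 2 ℙ := fun n j =>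
    memLp_finset_sum _ (fun k _ => (hXmem n k j).const_mul _)
  have hYint : ∀ n j, Integrable (Y n j) ℙ := fun n j => (hYmem n j).integrable one_le_two
  have hYzero : ∀ n j, ∫ ω, Y n j ω ∂ℙ = 0 := by
    intro n j
    have hy : Y n j = fun ω => ∑ k ∈ Finset.Icc j (Kn n), (k:ℝ)⁻¹ * X n k j ω := rfl
    rw [hy, integral_finset_sum _ (fun k _ => (hXint n k j).const_mul _)]
    refine Finset.sum_eq_zero (fun k _ => ?_)
    rw [integral_const_mul, hXzero n k j, mul_zero]
  have hY2int : ∀ n j, Integrable (fun ω => (Y n j ω)^2) ℙ := fun n j =>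
    (hYmem n j).integrable_sq
  have hY2le : ∀ n j, 1 ≤ j → ∫ ω, (Y n j ω)^2 ∂ℙ ≤ (Kn n : ℝ) * (2 * C) := by
    intro n j hj
    have hcard : ((Finset.Icc j (Kn n)).card : ℝ) ≤ (Kn n : ℝ) := by
      have h1 : (Finset.Icc j (Kn n)).card ≤ Kn n := by
        rw [Nat.card_Icc]; omega
      exact_mod_cast h1
    have hptY : ∀ ω, (Y n j ω)^2
        ≤ ((Finset.Icc j (Kn n)).card : ℝ) * ∑ k ∈ Finset.Icc j (Kn n), ((k:ℝ)⁻¹ * X n k j ω)^2 := by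
      intro ω
      have hy : Y n j ω = ∑ k ∈ Finset.Icc j (Kn n), (k:ℝ)⁻¹ * X n k j ω := rfl
      rw [hy]
      exact sq_sum_le_card_mul_sum_sq
    have hsqint : ∀ k : ℕ, Integrable (fun ω => ((k:ℝ)⁻¹ * X n k j ω)^2) ℙ := by
      intro k
      have he : (fun ω => ((k:ℝ)⁻¹ * X n k j ω)^2)
          = fun ω => ((k:ℝ)⁻¹)^2 * (X n k j ω)^2 := by funext ω; ring
      rw [he]
      exact ((hXmem n k j).integrable_sq).const_mul _
    have hrhsint : Integrable (fun ω => ((Finset.Icc j (Kn n)).card : ℝ)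
        * ∑ k ∈ Finset.Icc j (Kn n), ((k:ℝ)⁻¹ * X n k j ω)^2) ℙ :=
      (integrable_finset_sum _ (fun k _ => hsqint k)).const_mul _
    have hsum2 : ∑ k ∈ Finset.Icc j (Kn n), ((k:ℝ)⁻¹)^2 * ∫ ω, (X n k j ω)^2 ∂ℙ ≤ 2 * C := by
      calc ∑ k ∈ Finset.Icc j (Kn n), ((k:ℝ)⁻¹)^2 * ∫ ω, (X n k j ω)^2 ∂ℙ
          ≤ ∑ k ∈ Finset.Icc j (Kn n), ((k:ℝ)⁻¹)^2 * C :=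
            Finset.sum_le_sum (fun k _ =>
              mul_le_mul_of_nonneg_left (hX2le n k j) (by positivity))
        _ = (∑ k ∈ Finset.Icc j (Kn n), ((k:ℝ)⁻¹)^2) * C := by rw [Finset.sum_mul]
        _ ≤ 2 * C := by
            apply mul_le_mul_of_nonneg_right _ hC0
            calc ∑ k ∈ Finset.Icc j (Kn n), ((k:ℝ)⁻¹)^2
                ≤ ∑ k ∈ Finset.Icc 1 (Kn n), ((k:ℝ)⁻¹)^2 :=
                  Finset.sum_le_sum_of_subset_of_nonneg
                    (Finset.Icc_subset_Icc_left hj) (fun k _ _ => by positivity)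
              _ ≤ 2 := sum_inv_sq_le (Kn n)
    calc ∫ ω, (Y n j ω)^2 ∂ℙ
        ≤ ∫ ω, ((Finset.Icc j (Kn n)).card : ℝ)
            * ∑ k ∈ Finset.Icc j (Kn n), ((k:ℝ)⁻¹ * X n k j ω)^2 ∂ℙ :=
          integral_mono (hY2int n j) hrhsint hptY
      _ = ((Finset.Icc j (Kn n)).card : ℝ)
            * ∑ k ∈ Finset.Icc j (Kn n), ((k:ℝ)⁻¹)^2 * ∫ ω, (X n k j ω)^2 ∂ℙ := by
          rw [integral_const_mul, integral_finset_sum _ (fun k _ => hsqint k)]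
          congr 1
          refine Finset.sum_congr rfl (fun k _ => ?_)
          have he : (fun ω => ((k:ℝ)⁻¹ * X n k j ω)^2)
              = fun ω => ((k:ℝ)⁻¹)^2 * (X n k j ω)^2 := by funext ω; ring
          rw [he, integral_const_mul]
      _ ≤ (Kn n : ℝ) * (2 * C) := by
          apply mul_le_mul hcard hsum2 _ (Nat.cast_nonneg _)
          apply Finset.sum_nonneg
          intro k _
          have : (0:ℝ) ≤ ∫ ω, (X n k j ω)^2 ∂ℙ := integral_nonneg (fun ω => sq_nonneg _)
          positivity
  -- independence of the Y's
  have hYindep : ∀ n i j, i ≠ j → IndepFun (Y n i) (Y n j) ℙ := by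
    intro n i j hij
    have eℝ : (borel ℝ) = Real.measurableSpace :=
      (BorelSpace.measurable_eq (α := ℝ)).symm
    have hYm : ∀ j, Measurable[(fun j : ℕ => ⨆ k : ℕ,
        (MeasurableSpace.comap (ξ n k j) (borel ℝ) ⊔
         MeasurableSpace.comap (ζ n k j) (borel ℝ))) j] (Y n j) := by
      intro j
      have hy : Y n j = fun ω => ∑ k ∈ Finset.Icc j (Kn n),
          (k:ℝ)⁻¹ * (ξ n k j ω * ζ n k j ω - m n k j) := rfl
      rw [hy]
      apply Finset.measurable_sum
      intro k _
      apply Measurable.const_mul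
      apply Measurable.sub _ measurable_const
      apply Measurable.mul
      · exact Measurable.of_comap_le (by
          rw [← eℝ]
          exact le_trans le_sup_left (le_iSup (fun k : ℕ =>
            (MeasurableSpace.comap (ξ n k j) (borel ℝ) ⊔
             MeasurableSpace.comap (ζ n k j) (borel ℝ))) k))
      · exact Measurable.of_comap_le (by
          rw [← eℝ]
          exact le_trans le_sup_right (le_iSup (fun k : ℕ =>
            (MeasurableSpace.comap (ξ n k j) (borel ℝ) ⊔
             MeasurableSpace.comap (ζ n k j) (borel ℝ))) k))
    have hle : ∀ j, MeasurableSpace.comap (Y n j) Real.measurableSpace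
        ≤ (fun j : ℕ => ⨆ k : ℕ,
        (MeasurableSpace.comap (ξ n k j) (borel ℝ) ⊔
         MeasurableSpace.comap (ζ n k j) (borel ℝ))) j := fun j => (hYm j).comap_le
    exact indep_of_indep_of_le_left
      (indep_of_indep_of_le_right ((hindep n).indep hij) (hle j)) (hle i)
  -- S
  have hSmem : ∀ n, MemLp (S n) 2 ℙ := fun n =>
    memLp_finset_sum _ (fun j _ => hYmem n j)
  have hSmeas : ∀ n, Measurable (S n) := fun n =>
    Finset.measurable_sum _ (fun j _ => hYmeas n j)
  have hSzero : ∀ n, ∫ ω, S n ω ∂ℙ = 0 := by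
    intro n
    have hs : S n = fun ω => ∑ j ∈ Finset.Icc 1 (Kn n), Y n j ω := rfl
    rw [hs, integral_finset_sum _ (fun j _ => hYint n j)]
    exact Finset.sum_eq_zero (fun j _ => hYzero n j)
  have hSvar : ∀ n, variance (S n) ℙ ≤ (Kn n : ℝ) * ((Kn n : ℝ) * (2*C)) := by
    intro n
    have hv : variance (S n) ℙ = ∑ j ∈ Finset.Icc 1 (Kn n), variance (Y n j) ℙ := by
      have hvs := IndepFun.variance_sum (μ := ℙ) (X := Y n) (s := Finset.Icc 1 (Kn n))
        (fun j _ => hYmem n j) (fun i _ j _ hij => hYindep n i j hij)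
      have hs : S n = ∑ j ∈ Finset.Icc 1 (Kn n), Y n j := by
        funext ω
        rw [Finset.sum_apply]
      rw [hs]
      exact hvs
    rw [hv]
    have hvle : ∀ j, 1 ≤ j → variance (Y n j) ℙ ≤ (Kn n:ℝ) * (2*C) := by
      intro j hj
      rw [variance_eq_sub (hYmem n j)]
      have h2 : ℙ[Y n j] = 0 := hYzero n j
      have h3 : ℙ[Y n j ^ 2] = ∫ ω, (Y n j ω)^2 ∂ℙ := rfl
      rw [h2, h3]
      have := hY2le n j hj
      nlinarith
    calc ∑ j ∈ Finset.Icc 1 (Kn n), variance (Y n j) ℙ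
        ≤ ∑ j ∈ Finset.Icc 1 (Kn n), (Kn n:ℝ)*(2*C) :=
          Finset.sum_le_sum (fun j hj => hvle j (Finset.mem_Icc.1 hj).1)
      _ = ((Finset.Icc 1 (Kn n)).card : ℝ) * ((Kn n:ℝ)*(2*C)) := by
          rw [Finset.sum_const, nsmul_eq_mul]
      _ ≤ (Kn n:ℝ) * ((Kn n:ℝ)*(2*C)) := by
          apply mul_le_mul_of_nonneg_right _ (by positivity)
          simp [Nat.card_Icc]
  have hS2le : ∀ n, ∫ ω, (S n ω)^2 ∂ℙ ≤ (Kn n:ℝ)^2 * (2*C) := by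
    intro n
    have h := variance_eq_sub (hSmem n)
    have h2 : ℙ[S n] = 0 := hSzero n
    have h3 : ℙ[S n ^ 2] = ∫ ω, (S n ω)^2 ∂ℙ := rfl
    rw [h2, h3] at h
    have h4 : ∫ ω, (S n ω)^2 ∂ℙ = variance (S n) ℙ := by rw [h]; ring
    rw [h4]
    calc variance (S n) ℙ ≤ (Kn n:ℝ) * ((Kn n:ℝ)*(2*C)) := hSvar n
      _ = (Kn n:ℝ)^2 * (2*C) := by ring
  -- T
  have hS2int : ∀ n, Integrable (fun ω => (S n ω)^2) ℙ := fun n => (hSmem n).integrable_sq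
  have hTeq : ∀ n, (fun ω => (T n ω)^2) = fun ω => (((n:ℝ)^(-2:ℤ))^2) * (S n ω)^2 := by
    intro n
    funext ω
    have ht : T n ω = ((n:ℝ)^(-2:ℤ)) * S n ω := rfl
    rw [ht]; ring
  have hTmeas : ∀ n, Measurable (T n) := fun n => (hSmeas n).const_mul _
  have hT2int : ∀ n, Integrable (fun ω => (T n ω)^2) ℙ := by
    intro n
    rw [hTeq n]
    exact (hS2int n).const_mul _
  have hT2le : ∀ n, ∫ ω, (T n ω)^2 ∂ℙ ≤ (((n:ℝ)^(-2:ℤ))^2) * ((Kn n:ℝ)^2 * (2*C)) := by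
    intro n
    rw [hTeq n, integral_const_mul]
    exact mul_le_mul_of_nonneg_left (hS2le n) (sq_nonneg _)
  -- eventual bound
  obtain ⟨N₀, hN₀⟩ :=
    Filter.eventually_atTop.1 (hKn.eventually (eventually_le_nhds (lt_add_one K)))
  set N₁ := max N₀ 1 with hN₁def
  have hbound : ∀ n, N₁ ≤ n → ∫ ω, (T n ω)^2 ∂ℙ ≤ (2*C*(K+1)^2) * (1 / (n:ℝ)^2) := by
    intro n hn
    have hn1 : 1 ≤ n := le_trans (le_max_right _ _) hn
    have hn0 : (0:ℝ) < n := by exact_mod_cast hn1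
    have hKnle : (Kn n:ℝ) ≤ (K+1) * n := by
      have h := hN₀ n (le_trans (le_max_left _ _) hn)
      rw [div_le_iff₀ hn0] at h
      linarith
    have hz : ((n:ℝ)^(-2:ℤ))^2 = ((n:ℝ)^4)⁻¹ := by
      have h9 : (n:ℝ)^(-2:ℤ) = ((n:ℝ)^2)⁻¹ := by
        rw [zpow_neg, zpow_ofNat]
      rw [h9, inv_pow, ← pow_mul]
    calc ∫ ω, (T n ω)^2 ∂ℙ ≤ (((n:ℝ)^(-2:ℤ))^2) * ((Kn n:ℝ)^2 * (2*C)) := hT2le n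
      _ ≤ (((n:ℝ)^(-2:ℤ))^2) * (((K+1)*n)^2 * (2*C)) := by
          apply mul_le_mul_of_nonneg_left _ (sq_nonneg _)
          apply mul_le_mul_of_nonneg_right _ (by positivity)
          exact pow_le_pow_left₀ (Nat.cast_nonneg _) hKnle 2
      _ = (2*C*(K+1)^2) * (1 / (n:ℝ)^2) := by
          rw [hz]
          field_simp
  -- summability
  have hf0 : ∀ n, (0:ℝ) ≤ ∫ ω, (T n ω)^2 ∂ℙ := fun n =>
    integral_nonneg (fun ω => sq_nonneg _)
  have hsum : Summable (fun n => ∫ ω, (T n ω)^2 ∂ℙ) := by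
    rw [← summable_nat_add_iff N₁]
    have hs1 : Summable (fun n : ℕ => 1 / ((n:ℝ))^2) :=
      Real.summable_one_div_nat_pow.2 (by norm_num)
    have hs2 : Summable (fun n : ℕ => (2*C*(K+1)^2) * (1 / (((n + N₁ : ℕ)):ℝ)^2)) :=
      ((summable_nat_add_iff N₁).2 hs1).mul_left _
    exact Summable.of_nonneg_of_le (fun n => hf0 _)
      (fun n => hbound (n + N₁) (Nat.le_add_left _ _)) hs2
  -- ENNReal: a.e. finiteness of the series
  set g : ℕ → Ω → ENNReal := fun n ω => ENNReal.ofReal ((T n ω)^2) with hgdef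
  have hgmeas : ∀ n, Measurable (g n) := fun n =>
    ((hTmeas n).pow_const 2).ennreal_ofReal
  have hlg : ∀ n, ∫⁻ ω, g n ω ∂ℙ = ENNReal.ofReal (∫ ω, (T n ω)^2 ∂ℙ) := fun n =>
    (ofReal_integral_eq_lintegral_ofReal (hT2int n)
      (Filter.Eventually.of_forall (fun ω => sq_nonneg _))).symm
  have hts : ∑' n, ∫⁻ ω, g n ω ∂ℙ ≠ ⊤ := by
    simp_rw [hlg]
    rw [← ENNReal.ofReal_tsum_of_nonneg hf0 hsum]
    exact ENNReal.ofReal_ne_top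
  have hlt : ∀ᵐ ω ∂(ℙ : Measure Ω), ∑' n, g n ω < ⊤ := by
    apply ae_lt_top (Measurable.ennreal_tsum hgmeas)
    rw [lintegral_tsum (fun n => (hgmeas n).aemeasurable)]
    exact hts
  filter_upwards [hlt] with ω hω
  have h1 : Tendsto (fun n => g n ω) atTop (nhds 0) :=
    ENNReal.tendsto_atTop_zero_of_tsum_ne_top hω.ne
  have h2 : Tendsto (fun n => (T n ω)^2) atTop (nhds 0) := by
    have h3 := (ENNReal.tendsto_toReal (by simp : (0:ENNReal) ≠ ⊤)).comp h1
    simp only [ENNReal.toReal_zero] at h3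
    refine h3.congr (fun n => ?_)
    show (g n ω).toReal = (T n ω)^2
    rw [hgdef]
    exact ENNReal.toReal_ofReal (sq_nonneg _)
  have h4 : Tendsto (fun n => |T n ω|) atTop (nhds 0) := by
    have h5 := (Real.continuous_sqrt.tendsto 0).comp h2
    simp only [Real.sqrt_zero] at h5
    refine h5.congr (fun n => ?_)
    exact Real.sqrt_sq_eq_abs _
  have h6 : Tendsto (fun n => T n ω) atTop (nhds 0) := by
    rw [tendsto_zero_iff_abs_tendsto_zero]
    exact h4
  have hswap : ∀ (N : ℕ) (F : ℕ → ℕ → ℝ),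
      ∑ k ∈ Finset.Icc 1 N, (k:ℝ)⁻¹ * ∑ j ∈ Finset.Icc 1 k, F k j
        = ∑ j ∈ Finset.Icc 1 N, ∑ k ∈ Finset.Icc j N, (k:ℝ)⁻¹ * F k j := by
    intro N F
    rw [← swap_sum N (fun k j => (k:ℝ)⁻¹ * F k j)]
    exact Finset.sum_congr rfl (fun k _ => Finset.mul_sum _ _ _)
  refine h6.congr (fun n => ?_)
  have ht : T n ω = ((n:ℝ)^(-2:ℤ)) *
      ∑ j ∈ Finset.Icc 1 (Kn n), ∑ k ∈ Finset.Icc j (Kn n),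
        (k:ℝ)⁻¹ * (ξ n k j ω * ζ n k j ω - ∫ ω', ξ n k j ω' * ζ n k j ω' ∂ℙ) := rfl
  rw [ht, hswap (Kn n) (fun k j => ξ n k j ω * ζ n k j ω - ∫ ω', ξ n k j ω' * ζ n k j ω' ∂ℙ)]
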